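/- Let (λᵢ)ᵢ be nonnegative reals summing to 1 and suppose for every matrix x one has ‖u(x)‖² ≤ K²(Σᵢⱼ λᵢ|xᵢⱼ|² · Σᵢⱼ λⱼ|xᵢⱼ|²)^{1/2}. Fix t ≥ 2 and let S(2) = {(i,j) : λᵢ > t²λⱼ}. Then for the truncation u₂(x) = u(Σ_{(i,j)∈S(2)} xᵢⱼ eᵢⱼ) one has ‖u₂(x)‖² ≤ K² t^{-1} Σᵢⱼ λᵢ |xᵢⱼ|². -/

import Mathlib

open Finset

/-- Suppose `λᵢ ≥ 0`, `Σ λᵢ = 1`, and `‖u(x)‖² ≤ K² (Σᵢⱼ λᵢ|xᵢⱼ|² · Σᵢⱼ λⱼ|xᵢⱼ|²)^{1/2}`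
for every `x ∈ M_N(ℂ)`.  Fix `t ≥ 2` and let `S(2) = {(i,j) : λᵢ > t² λⱼ}`.  Then the
truncation `u₂(x) = u(Σ_{(i,j) ∈ S(2)} xᵢⱼ eᵢⱼ)` satisfies
`‖u₂(x)‖² ≤ K² t⁻¹ Σᵢⱼ λᵢ |xᵢⱼ|²`. -/
theorem truncation_bound {N : ℕ} {H : Type*}
    [NormedAddCommGroup H] [InnerProductSpace ℂ H]
    (u : Matrix (Fin N) (Fin N) ℂ →ₗ[ℂ] H) (K : ℝ) (hK : 0 ≤ K)
    (lam : Fin N → ℝ) (hlam : ∀ i, 0 ≤ lam i) (hsum : ∑ i, lam i = 1)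
    (hu : ∀ x : Matrix (Fin N) (Fin N) ℂ,
      ‖u x‖ ^ 2 ≤ K ^ 2 * Real.sqrt
        ((∑ i, ∑ j, lam i * ‖x i j‖ ^ 2) *
         (∑ i, ∑ j, lam j * ‖x i j‖ ^ 2)))
    (t : ℝ) (ht : 2 ≤ t) :
    ∀ x : Matrix (Fin N) (Fin N) ℂ,
      ‖u (Matrix.of fun i j => if lam i > t ^ 2 * lam j then x i j else 0)‖ ^ 2 ≤
        K ^ 2 * t⁻¹ * ∑ i, ∑ j, lam i * ‖x i j‖ ^ 2 := by
  intro x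
  have ht0 : (0:ℝ) < t := by linarith
  set y : Matrix (Fin N) (Fin N) ℂ :=
    Matrix.of fun i j => if lam i > t ^ 2 * lam j then x i j else 0 with hy
  set A := ∑ i, ∑ j, lam i * ‖y i j‖ ^ 2 with hA
  set B := ∑ i, ∑ j, lam j * ‖y i j‖ ^ 2 with hB
  have hA0 : 0 ≤ A := Finset.sum_nonneg fun i _ =>
    Finset.sum_nonneg fun j _ => mul_nonneg (hlam i) (sq_nonneg _)
  have hAle : A ≤ ∑ i, ∑ j, lam i * ‖x i j‖ ^ 2 := by
    apply Finset.sum_le_sum; intro i _; apply Finset.sum_le_sum; intro j _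
    have hle : ‖y i j‖ ≤ ‖x i j‖ := by
      simp only [hy, Matrix.of_apply]
      split <;> simp
    exact mul_le_mul_of_nonneg_left (pow_le_pow_left₀ (norm_nonneg _) hle 2) (hlam i)
  have hBle : B ≤ t⁻¹ ^ 2 * A := by
    rw [hB, hA, Finset.mul_sum]
    apply Finset.sum_le_sum; intro i _
    rw [Finset.mul_sum]
    apply Finset.sum_le_sum; intro j _
    by_cases h : lam i > t ^ 2 * lam j
    · have h2 : lam j ≤ t⁻¹ ^ 2 * lam i := by
        rw [inv_pow, inv_mul_eq_div, le_div_iff₀ (by positivity)]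
        nlinarith
      nlinarith [sq_nonneg (‖y i j‖)]
    · have hz : y i j = 0 := by simp [hy, h]
      simp only [hz, map_zero, norm_zero]
      norm_num
  have hsqrt : Real.sqrt (A * B) ≤ t⁻¹ * A := by
    have h1 : A * B ≤ (t⁻¹ * A) ^ 2 := by
      have : A * B ≤ A * (t⁻¹ ^ 2 * A) := by nlinarith
      nlinarith
    calc Real.sqrt (A * B) ≤ Real.sqrt ((t⁻¹ * A) ^ 2) := Real.sqrt_le_sqrt h1
    _ = t⁻¹ * A := Real.sqrt_sq (by positivity)
  calc ‖u y‖ ^ 2 ≤ K ^ 2 * Real.sqrt (A * B) := hu y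
  _ ≤ K ^ 2 * (t⁻¹ * A) := by nlinarith [sq_nonneg K]
  _ = K ^ 2 * t⁻¹ * A := by ring
  _ ≤ K ^ 2 * t⁻¹ * ∑ i, ∑ j, lam i * ‖x i j‖ ^ 2 := by
      apply mul_le_mul_of_nonneg_left hAle (by positivity)
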